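/- Let p be an odd prime and λ ∈ ℤ_p. Then Σ_{k=0}^{(p−1)/2} C(2k,k)² (λ/16)^k ≡ Σ_{k=0}^{(p−1)/2} C((p−1)/2 + k, k) · C((p−1)/2, k) · (−λ)^k (mod p² ℤ_p). -/

import Mathlib

open Finset

private lemma fact_two_mul (k : ℕ) :
    (2 * k).factorial = 2 ^ k * k.factorial * ∏ i ∈ range k, (2 * i + 1) := by
  induction k with
  | zero => simp
  | succ n ih =>
    have h : 2 * (n + 1) = (2 * n + 1) + 1 := by ring
    rw [h, Nat.factorial_succ, Nat.factorial_succ, ih, prod_range_succ, Nat.factorial_succ]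
    ring

private lemma choose_two_mul (k : ℕ) :
    (2 * k).choose k * k.factorial = 2 ^ k * ∏ i ∈ range k, (2 * i + 1) := by
  have h := Nat.choose_mul_factorial_mul_factorial (show k ≤ 2 * k by omega)
  have h2 : 2 * k - k = k := by omega
  rw [h2] at h
  have := fact_two_mul k
  apply Nat.eq_of_mul_eq_mul_right (Nat.factorial_pos k)
  rw [h, this]; ring

private lemma asc_prod (m k : ℕ) :
    (m + k).descFactorial k = ∏ i ∈ range k, (m + 1 + i) := by
  rw [Nat.descFactorial_eq_prod_range, ← Finset.prod_range_reflect (fun i => m + k - i) k]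
  exact prod_congr rfl fun i hi => by have := mem_range.1 hi; omega

theorem stmt11 (p : ℕ) [Fact p.Prime] (hp : Odd p) (lam : ℤ_[p]) :
    ‖(∑ k ∈ range ((p - 1) / 2 + 1),
          (Nat.choose (2 * k) k : ℚ_[p]) ^ 2 * ((lam : ℚ_[p]) / 16) ^ k)
        - ∑ k ∈ range ((p - 1) / 2 + 1),
            (Nat.choose ((p - 1) / 2 + k) k : ℚ_[p]) *
              (Nat.choose ((p - 1) / 2) k : ℚ_[p]) * (-(lam : ℚ_[p])) ^ k‖
      ≤ (p : ℝ) ^ (-2 : ℤ) := by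
  have hprime := (Fact.out : p.Prime)
  obtain ⟨m, hm⟩ := hp
  have h2 : (p - 1) / 2 = m := by omega
  rw [h2, ← Finset.sum_sub_distrib]
  have hbound : (0:ℝ) ≤ (p:ℝ) ^ (-2 : ℤ) := by positivity
  refine IsUltrametricDist.norm_sum_le_of_forall_le_of_nonneg hbound fun k hk => ?_
  have hkm : k ≤ m := by simpa using Nat.lt_succ_iff.mp (mem_range.1 hk)
  -- basic facts
  have hp2 : ((p:ℚ_[p])) = 2 * m + 1 := by exact_mod_cast congrArg (Nat.cast (R := ℚ_[p])) hm
  -- A identity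
  have hA : ((2*k).choose k : ℚ_[p]) * (k.factorial : ℚ_[p]) =
      2 ^ k * ∏ i ∈ range k, ((2*i+1 : ℚ_[p])) := by
    have := congrArg (Nat.cast (R := ℚ_[p])) (choose_two_mul k)
    push_cast at this
    exact this
  -- B identity
  have c1 : (k.factorial : ℚ_[p]) * ((m+k).choose k : ℚ_[p]) =
      ∏ i ∈ range k, ((m:ℚ_[p]) + 1 + i) := by
    have h3 := (Nat.descFactorial_eq_factorial_mul_choose (m+k) k).symm.trans (asc_prod m k)
    have := congrArg (Nat.cast (R := ℚ_[p])) h3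
    push_cast at this
    exact this
  have c2 : (k.factorial : ℚ_[p]) * (m.choose k : ℚ_[p]) =
      ∏ i ∈ range k, ((m:ℚ_[p]) - i) := by
    have h4 := (Nat.descFactorial_eq_factorial_mul_choose m k).symm.trans
      (Nat.descFactorial_eq_prod_range m k)
    have h5 := congrArg (Nat.cast (R := ℚ_[p])) h4
    push_cast at h5
    rw [h5]
    exact prod_congr rfl fun i hi =>
      Nat.cast_sub ((mem_range.1 hi).le.trans hkm)
  have hB : ((m+k).choose k : ℚ_[p]) * (m.choose k : ℚ_[p]) * (k.factorial : ℚ_[p])^2 * 4^k =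
      ∏ i ∈ range k, ((p:ℚ_[p])^2 - (2*i+1)^2) := by
    calc ((m+k).choose k : ℚ_[p]) * (m.choose k : ℚ_[p]) * (k.factorial : ℚ_[p])^2 * 4^k
        = ((k.factorial : ℚ_[p]) * ((m+k).choose k)) * ((k.factorial : ℚ_[p]) * (m.choose k))
            * ∏ _i ∈ range k, (4:ℚ_[p]) := by rw [prod_const, card_range]; ring
      _ = ∏ i ∈ range k, (((m:ℚ_[p]) + 1 + i) * ((m:ℚ_[p]) - i) * 4) := by
          rw [c1, c2, ← prod_mul_distrib, ← prod_mul_distrib]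
      _ = ∏ i ∈ range k, ((p:ℚ_[p])^2 - (2*i+1)^2) := by
          refine prod_congr rfl fun i hi => ?_
          rw [hp2]; ring
  -- the integer z and divisibility
  set z : ℤ := (∏ i ∈ range k, ((2*(i:ℤ)+1))^2) - ∏ i ∈ range k, ((2*(i:ℤ)+1)^2 - (p:ℤ)^2) with hzdef
  have hzdvd : ((p:ℤ))^2 ∣ z := by
    have h0 : ((z : ℤ) : ZMod (p^2)) = 0 := by
      have hp0 : ((p : ZMod (p^2)))^2 = 0 := by
        have := ZMod.natCast_self (p^2)
        push_cast at this
        exact this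
      rw [hzdef]
      push_cast
      simp [hp0]
    have := (ZMod.intCast_zmod_eq_zero_iff_dvd z (p^2)).1 h0
    exact_mod_cast this
  -- key equation
  have h16 : ((16:ℚ_[p]))^k * (k.factorial : ℚ_[p])^2 ≠ 0 := by
    exact mul_ne_zero (pow_ne_zero _ (by norm_num))
      (pow_ne_zero _ (Nat.cast_ne_zero.2 (Nat.factorial_ne_zero k)))
  have hzcast : ((z:ℤ) : ℚ_[p]) =
      (∏ i ∈ range k, ((2*(i:ℚ_[p])+1))^2) - ∏ i ∈ range k, ((2*(i:ℚ_[p])+1)^2 - (p:ℚ_[p])^2) := by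
    rw [hzdef]; push_cast; ring
  have hneg : ∏ i ∈ range k, ((2*(i:ℚ_[p])+1)^2 - (p:ℚ_[p])^2)
      = (-1:ℚ_[p])^k * ∏ i ∈ range k, ((p:ℚ_[p])^2 - (2*i+1)^2) := by
    have h1 : ∏ i ∈ range k, ((2*(i:ℚ_[p])+1)^2 - (p:ℚ_[p])^2)
        = ∏ i ∈ range k, ((-1:ℚ_[p]) * ((p:ℚ_[p])^2 - (2*i+1)^2)) :=
      prod_congr rfl fun i _ => by ring
    rw [h1, prod_mul_distrib, prod_const, card_range]
  have key : (((2*k).choose k : ℚ_[p]) ^ 2 * ((lam : ℚ_[p]) / 16) ^ k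
        - ((m+k).choose k : ℚ_[p]) * (m.choose k : ℚ_[p]) * (-(lam : ℚ_[p])) ^ k)
        * ((16:ℚ_[p])^k * (k.factorial : ℚ_[p])^2)
      = (lam : ℚ_[p])^k * 4^k * (z : ℚ_[p]) := by
    have hA2 : ((2*k).choose k : ℚ_[p])^2 * (k.factorial : ℚ_[p])^2 =
        4^k * ∏ i ∈ range k, ((2*i+1 : ℚ_[p]))^2 := by
      have := congrArg (fun x => x^2) hA
      simp only [mul_pow] at this
      rw [this, ← prod_pow, show ((4:ℚ_[p])) = 2^2 by norm_num, ← pow_mul, ← pow_mul,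
        mul_comm 2 k]
    have hdiv : ((lam : ℚ_[p]) / 16) ^ k * (16:ℚ_[p])^k = (lam : ℚ_[p])^k := by
      rw [div_pow, div_mul_cancel₀]
      exact pow_ne_zero _ (by norm_num)
    have hnl : (-(lam : ℚ_[p]))^k = (-1:ℚ_[p])^k * (lam : ℚ_[p])^k := by
      rw [← neg_one_mul, mul_pow]
    calc (((2*k).choose k : ℚ_[p]) ^ 2 * ((lam : ℚ_[p]) / 16) ^ k
        - ((m+k).choose k : ℚ_[p]) * (m.choose k : ℚ_[p]) * (-(lam : ℚ_[p])) ^ k)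
        * ((16:ℚ_[p])^k * (k.factorial : ℚ_[p])^2)
        = (((2*k).choose k : ℚ_[p])^2 * (k.factorial : ℚ_[p])^2) * (((lam:ℚ_[p])/16)^k * 16^k)
          - (-1:ℚ_[p])^k * (lam:ℚ_[p])^k * ((16:ℚ_[p]))^k *
            (((m+k).choose k : ℚ_[p]) * (m.choose k : ℚ_[p]) * (k.factorial : ℚ_[p])^2) := by
            rw [hnl]; ring
      _ = (4^k * ∏ i ∈ range k, ((2*i+1 : ℚ_[p]))^2) * (lam:ℚ_[p])^k
          - (-1:ℚ_[p])^k * (lam:ℚ_[p])^k * 4^k *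
            (((m+k).choose k : ℚ_[p]) * (m.choose k : ℚ_[p]) * (k.factorial : ℚ_[p])^2 * 4^k) := by
            rw [hA2, hdiv]
            have : ((16:ℚ_[p]))^k = 4^k * 4^k := by rw [← mul_pow]; norm_num
            rw [this]; ring
      _ = (lam:ℚ_[p])^k * 4^k * ((z:ℚ_[p])) := by
            rw [hB, hzcast, hneg]; ring
  -- now the norm bound
  have heq : (((2*k).choose k : ℚ_[p]) ^ 2 * ((lam : ℚ_[p]) / 16) ^ k
        - ((m+k).choose k : ℚ_[p]) * (m.choose k : ℚ_[p]) * (-(lam : ℚ_[p])) ^ k)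
      = (lam : ℚ_[p])^k * 4^k * (z : ℚ_[p]) / ((16:ℚ_[p])^k * (k.factorial : ℚ_[p])^2) :=
    eq_div_of_mul_eq h16 key
  rw [heq]
  -- norms of units
  have hint_unit : ∀ n : ℤ, ¬ (p:ℤ) ∣ n → ‖(n : ℚ_[p])‖ = 1 := fun n hd =>
    le_antisymm (Padic.norm_int_le_one n)
      (not_lt.1 fun hlt => hd ((Padic.norm_intCast_lt_one_iff (k := n)).1 hlt))
  have hpm : p ≠ 2 := by omega
  have h16n : ‖((16:ℚ_[p]))‖ = 1 := by
    have h : ¬ (p:ℤ) ∣ (16:ℤ) := by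
      intro h
      have h' : p ∣ 16 := by exact_mod_cast h
      have : p ∣ 2 := hprime.dvd_of_dvd_pow (show p ∣ 2^4 by norm_num at h' ⊢; exact h')
      have h1 := Nat.le_of_dvd (by norm_num) this
      have h2' := hprime.two_le
      omega
    have := hint_unit 16 h
    norm_num at this
    exact this
  have h4n : ‖((4:ℚ_[p]))‖ = 1 := by
    have h : ¬ (p:ℤ) ∣ (4:ℤ) := by
      intro h
      have h' : p ∣ 4 := by exact_mod_cast h
      have : p ∣ 2 := hprime.dvd_of_dvd_pow (show p ∣ 2^2 by norm_num at h' ⊢; exact h')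
      have h1 := Nat.le_of_dvd (by norm_num) this
      have h2' := hprime.two_le
      omega
    have := hint_unit 4 h
    norm_num at this
    exact this
  have hfn : ‖((k.factorial : ℚ_[p]))‖ = 1 := by
    have h : ¬ (p:ℤ) ∣ (k.factorial : ℤ) := by
      rw [Int.natCast_dvd_natCast]
      rw [hprime.dvd_factorial]
      omega
    have := hint_unit (k.factorial : ℤ) h
    rwa [Int.cast_natCast] at this
  have hzn : ‖((z : ℚ_[p]))‖ ≤ ((p:ℝ))⁻¹ ^ 2 := by
    obtain ⟨w, hw⟩ := hzdvd
    have hcast : ((z : ℤ) : ℚ_[p]) = (p : ℚ_[p])^2 * (w : ℚ_[p]) := by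
      rw [hw]; push_cast; ring
    rw [hcast, norm_mul, norm_pow, Padic.norm_p]
    calc ((p:ℝ))⁻¹ ^ 2 * ‖(w : ℚ_[p])‖ ≤ ((p:ℝ))⁻¹ ^ 2 * 1 := by
          have := Padic.norm_int_le_one (p := p) w
          gcongr
      _ = ((p:ℝ))⁻¹ ^ 2 := mul_one _
  have hlamn : ‖((lam : ℚ_[p]))‖ ≤ 1 := by
    rw [PadicInt.padic_norm_e_of_padicInt]
    exact PadicInt.norm_le_one lam
  have hfinal : ((p:ℝ)) ^ (-2 : ℤ) = ((p:ℝ))⁻¹ ^ 2 := by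
    have hp0 : (0:ℝ) < (p:ℝ) := by exact_mod_cast hprime.pos
    rw [zpow_neg, inv_pow, ← zpow_natCast]
    norm_num
  rw [norm_div]
  simp only [norm_mul, norm_pow, h16n, h4n, hfn, hfinal, one_pow, mul_one, div_one]
  calc ‖(lam : ℚ_[p])‖ ^ k * ‖((z : ℚ_[p]))‖ ≤ 1 * (((p:ℝ))⁻¹ ^ 2) := by
        have h1 : ‖(lam : ℚ_[p])‖ ^ k ≤ 1 := pow_le_one₀ (norm_nonneg _) hlamn
        have h2 : (0:ℝ) ≤ ‖((z : ℚ_[p]))‖ := norm_nonneg _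
        exact mul_le_mul h1 hzn h2 zero_le_one
    _ = ((p:ℝ))⁻¹ ^ 2 := one_mul _
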